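/- Let A : [0,1] → M₂(ℝ) be of the form A(α) = [[a₁₁(α), a₁₂],[a₂₁, a₂₂]] where a₁₁ : [0,1] → ℝ is differentiable and a₁₂, a₂₁, a₂₂ are constants, and suppose (i) a₂₂ < 0, (ii) det A(α) > 0 for all α ∈ [0,1], and (iii) tr A(α) < 0 for all α ∈ [0,1]. Let P(α) be the unique solution of P(α)A(α) + A(α)ᵀP(α) = −I. Then there exists a universal constant C₀ > 0, not depending on the coefficients of A, such that for all α ∈ [0,1]: |a₁₁′(α)|/(2 tr(A(α))²) ≤ ‖P′(α)‖₂ ≤ C₀ |a₁₁′(α)| ‖A(α)‖₂⁴/(tr(A(α)) det(A(α)))². -/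

import Mathlib

open Set Matrix

/-- Frobenius norm of a real `2 × 2` matrix. -/
noncomputable def frobNorm (M : Matrix (Fin 2) (Fin 2) ℝ) : ℝ :=
  Real.sqrt (∑ i, ∑ j, M i j ^ 2)


set_option maxHeartbeats 2000000 in
lemma final_ineq (x v b c d : ℝ) (hd : d < 0) (hτ : x + d < 0) (hδ : 0 < x*d - b*c) :
    |v| / (2*(x+d)^2) ≤
      Real.sqrt ((v * (((x*d-b*c)^2 + (c^2+d^2)*(x*d-b*c) + (c^2+d^2)*((x+d)*d)) /
          (2*(x+d)^2*(x*d-b*c)^2)))^2 +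
        (v * ((c*(x+d)*(x*d-b*c) - (x*c + b*d)*((x*d-b*c) + (x+d)*d)) /
          (2*(x+d)^2*(x*d-b*c)^2)))^2 +
        ((v * ((c*(x+d)*(x*d-b*c) - (x*c + b*d)*((x*d-b*c) + (x+d)*d)) /
          (2*(x+d)^2*(x*d-b*c)^2)))^2 +
         (v * ((((x*d-b*c) + (x^2+b^2))*((x*d-b*c) + (x+d)*d)
            - (d + 2*x)*(x+d)*(x*d-b*c)) / (2*(x+d)^2*(x*d-b*c)^2)))^2)) ∧
      Real.sqrt ((v * (((x*d-b*c)^2 + (c^2+d^2)*(x*d-b*c) + (c^2+d^2)*((x+d)*d)) /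
          (2*(x+d)^2*(x*d-b*c)^2)))^2 +
        (v * ((c*(x+d)*(x*d-b*c) - (x*c + b*d)*((x*d-b*c) + (x+d)*d)) /
          (2*(x+d)^2*(x*d-b*c)^2)))^2 +
        ((v * ((c*(x+d)*(x*d-b*c) - (x*c + b*d)*((x*d-b*c) + (x+d)*d)) /
          (2*(x+d)^2*(x*d-b*c)^2)))^2 +
         (v * ((((x*d-b*c) + (x^2+b^2))*((x*d-b*c) + (x+d)*d)
            - (d + 2*x)*(x+d)*(x*d-b*c)) / (2*(x+d)^2*(x*d-b*c)^2)))^2)) ≤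
      100 * |v| * Real.sqrt (x^2 + b^2 + c^2 + d^2) ^ 4 / ((x+d)*(x*d-b*c))^2 := by
  have hτne : x + d ≠ 0 := ne_of_lt hτ
  have hδne : x*d - b*c ≠ 0 := ne_of_gt hδ
  set S := x^2 + b^2 + c^2 + d^2 with hSdef
  set D := 2*(x+d)^2*(x*d-b*c)^2 with hDdef
  set N0 := (x*d-b*c)^2 + (c^2+d^2)*(x*d-b*c) + (c^2+d^2)*((x+d)*d) with hN0def
  set N1 := c*(x+d)*(x*d-b*c) - (x*c + b*d)*((x*d-b*c) + (x+d)*d) with hN1def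
  set N2 := ((x*d-b*c) + (x^2+b^2))*((x*d-b*c) + (x+d)*d)
            - (d + 2*x)*(x+d)*(x*d-b*c) with hN2def
  clear_value S D N0 N1 N2
  have tri : ∀ p q : ℝ, |p - q| ≤ |p| + |q| := fun p q => by
    rw [sub_eq_add_neg]; simpa using abs_add_le p (-q)
  have hD : (0:ℝ) < D := by rw [hDdef]; positivity
  have hS0 : (0:ℝ) ≤ S := by rw [hSdef]; positivity
  have hδS : x*d - b*c ≤ S := by
    rw [hSdef]; nlinarith [sq_nonneg (x-d), sq_nonneg (b+c)]
  have hSpos : (0:ℝ) < S := lt_of_lt_of_le hδ hδS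
  have hτd0 : (0:ℝ) < (x+d)*d := mul_pos_of_neg_of_neg hτ hd
  have hτdS : (x+d)*d ≤ 2*S := by
    rw [hSdef]; nlinarith [sq_nonneg (x-d), sq_nonneg b, sq_nonneg c]
  have hK : c^2+d^2 ≤ S := by rw [hSdef]; nlinarith [sq_nonneg x, sq_nonneg b]
  have hK0 : (0:ℝ) ≤ c^2+d^2 := by positivity
  have hL : x^2+b^2 ≤ S := by rw [hSdef]; nlinarith [sq_nonneg c, sq_nonneg d]
  have hN0lb : (x*d-b*c)^2 ≤ N0 := by
    rw [hN0def]; nlinarith [mul_nonneg hK0 hδ.le, mul_nonneg hK0 hτd0.le]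
  have hN0pos : (0:ℝ) ≤ N0 := le_trans (sq_nonneg _) hN0lb
  have hN0ub : N0 ≤ 10*S^2 := by
    rw [hN0def]
    nlinarith [mul_le_mul hδS hδS hδ.le hS0, mul_le_mul hK hδS hδ.le hS0,
      mul_le_mul hK hτdS hτd0.le hS0]
  have hcτ : |c*(x+d)| ≤ 2*S := by
    rw [abs_le, hSdef]
    constructor <;>
      nlinarith [sq_nonneg (c+x), sq_nonneg (c-x), sq_nonneg (c+d), sq_nonneg (c-d), sq_nonneg b]
  have hxc : |x*c+b*d| ≤ S := by
    rw [abs_le, hSdef]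
    constructor <;>
      nlinarith [sq_nonneg (x+c), sq_nonneg (x-c), sq_nonneg (b+d), sq_nonneg (b-d)]
  have hsum0 : (0:ℝ) < (x*d-b*c) + (x+d)*d := by linarith
  have hsumS : (x*d-b*c) + (x+d)*d ≤ 3*S := by linarith
  have hN1 : |N1| ≤ 10*S^2 := by
    have h1 : |c*(x+d)*(x*d-b*c)| ≤ 2*S*S := by
      rw [abs_mul, abs_of_pos hδ]
      exact mul_le_mul hcτ hδS hδ.le (by linarith)
    have h2 : |(x*c+b*d)*((x*d-b*c) + (x+d)*d)| ≤ S*(3*S) := by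
      rw [abs_mul, abs_of_pos hsum0]
      exact mul_le_mul hxc hsumS hsum0.le hS0
    calc |N1| ≤ |c*(x+d)*(x*d-b*c)| + |(x*c+b*d)*((x*d-b*c) + (x+d)*d)| := by
          rw [hN1def]; exact tri _ _
      _ ≤ 2*S*S + S*(3*S) := add_le_add h1 h2
      _ ≤ 10*S^2 := by nlinarith [sq_nonneg S]
  have hdτ : |(d+2*x)*(x+d)| ≤ 4*S := by
    rw [abs_le, hSdef]
    constructor <;>
      nlinarith [sq_nonneg (x+d), sq_nonneg (x-d), sq_nonneg b, sq_nonneg c]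
  have hN2 : |N2| ≤ 10*S^2 := by
    have h1 : |((x*d-b*c) + (x^2+b^2))*((x*d-b*c) + (x+d)*d)| ≤ 2*S*(3*S) := by
      rw [abs_of_pos (mul_pos (by nlinarith [sq_nonneg x, sq_nonneg b] :
        (0:ℝ) < (x*d-b*c) + (x^2+b^2)) hsum0)]
      exact mul_le_mul (by nlinarith [sq_nonneg x, sq_nonneg b]) hsumS hsum0.le (by linarith)
    have h2 : |(d+2*x)*(x+d)*(x*d-b*c)| ≤ 4*S*S := by
      rw [abs_mul, abs_of_pos hδ]
      exact mul_le_mul hdτ hδS hδ.le (by linarith)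
    calc |N2| ≤ |((x*d-b*c) + (x^2+b^2))*((x*d-b*c) + (x+d)*d)|
          + |(d+2*x)*(x+d)*(x*d-b*c)| := by rw [hN2def]; exact tri _ _
      _ ≤ 2*S*(3*S) + 4*S*S := add_le_add h1 h2
      _ ≤ 10*S^2 := by nlinarith [sq_nonneg S]
  -- absolute values of the entries
  have e0 : |v*(N0/D)| = |v| * (N0/D) := by
    rw [abs_mul, abs_of_nonneg (div_nonneg hN0pos hD.le)]
  have e1 : |v*(N1/D)| = |v| * (|N1|/D) := by
    rw [abs_mul, abs_div, abs_of_pos hD]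
  have e2 : |v*(N2/D)| = |v| * (|N2|/D) := by
    rw [abs_mul, abs_div, abs_of_pos hD]
  constructor
  · -- lower bound
    have hlow : |v|/(2*(x+d)^2) ≤ |v*(N0/D)| := by
      rw [e0]
      have h1 : 1/(2*(x+d)^2) ≤ N0/D := by
        clear e0 e1 e2 hN1 hN2 hcτ hxc hdτ tri
        rw [div_le_div_iff₀ (by positivity) hD, hDdef]
        nlinarith [mul_le_mul_of_nonneg_right hN0lb (sq_nonneg (x+d))]
      calc |v|/(2*(x+d)^2) = |v| * (1/(2*(x+d)^2)) := by ring
        _ ≤ |v| * (N0/D) := mul_le_mul_of_nonneg_left h1 (abs_nonneg v)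
    refine le_trans hlow ?_
    clear hlow e0 e1 e2 hN1 hN2 hcτ hxc hdτ tri
    set u0 := v*(N0/D) with hu0def
    set u1 := v*(N1/D) with hu1def
    set u2 := v*(N2/D) with hu2def
    clear_value u0 u1 u2
    rw [← Real.sqrt_sq_eq_abs]
    apply Real.sqrt_le_sqrt
    linarith [sq_nonneg u1, sq_nonneg u2]
  · -- upper bound
    set B := |v| * (10*S^2/D) with hBdef
    clear_value B
    have hB0 : (0:ℝ) ≤ B := by
      rw [hBdef]
      exact mul_nonneg (abs_nonneg v) (div_nonneg (by positivity) hD.le)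
    have b0 : |v*(N0/D)| ≤ B := by
      rw [e0, hBdef]
      refine mul_le_mul_of_nonneg_left ?_ (abs_nonneg v)
      gcongr
    have b1 : |v*(N1/D)| ≤ B := by
      rw [e1, hBdef]
      refine mul_le_mul_of_nonneg_left ?_ (abs_nonneg v)
      gcongr
    have b2 : |v*(N2/D)| ≤ B := by
      rw [e2, hBdef]
      refine mul_le_mul_of_nonneg_left ?_ (abs_nonneg v)
      gcongr
    clear e0 e1 e2 hN1 hN2 hcτ hxc hdτ tri
    set u0 := v*(N0/D) with hu0def
    set u1 := v*(N1/D) with hu1def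
    set u2 := v*(N2/D) with hu2def
    clear_value u0 u1 u2
    have hstep : Real.sqrt (u0^2 + u1^2 + (u1^2 + u2^2)) ≤ 2*B := by
      have h4 : u0^2 + u1^2 + (u1^2 + u2^2) ≤ (2*B)^2 := by
        linarith [pow_le_pow_left₀ (abs_nonneg u0) b0 2,
          pow_le_pow_left₀ (abs_nonneg u1) b1 2,
          pow_le_pow_left₀ (abs_nonneg u2) b2 2,
          sq_abs u0, sq_abs u1, sq_abs u2]
      calc Real.sqrt (u0^2 + u1^2 + (u1^2 + u2^2))
          ≤ Real.sqrt ((2*B)^2) := Real.sqrt_le_sqrt h4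
        _ = 2*B := Real.sqrt_sq (by linarith)
    refine le_trans hstep ?_
    have hsq : Real.sqrt S ^ 4 = S^2 := by
      rw [show (4:ℕ) = 2*2 from rfl, pow_mul, Real.sq_sqrt hS0]
    have hR : 100 * |v| * Real.sqrt S ^ 4 / ((x+d)*(x*d-b*c))^2
        = 100 * |v| * S^2 / ((x+d)^2*(x*d-b*c)^2) := by
      rw [hsq]; ring
    refine le_trans ?_ (le_of_eq hR.symm)
    calc 2*B = 20 * |v| * S^2 / D := by rw [hBdef]; ring
      _ ≤ 100 * |v| * S^2 / ((x+d)^2*(x*d-b*c)^2) := by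
        clear hstep b0 b1 b2
        rw [div_le_div_iff₀ hD (by positivity), hDdef]
        linarith [mul_nonneg (mul_nonneg (mul_nonneg (abs_nonneg v) (sq_nonneg S))
          (sq_nonneg (x+d))) (sq_nonneg (x*d-b*c))]

lemma aux_deriv (b c d e₀ e₁ e₂ x : ℝ) (h1 : x + d ≠ 0) (h2 : x*d - b*c ≠ 0) :
    HasDerivAt (fun y => (e₀ + e₁*y + e₂*y^2) / (2*(y+d)*(y*d - b*c)))
      (((e₁ + 2*e₂*x)*(2*(x+d)*(x*d-b*c)) -
        (e₀+e₁*x+e₂*x^2)*(2*(x*d-b*c) + 2*(x+d)*d)) / (2*(x+d)*(x*d-b*c))^2) x := by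
  have hnum : HasDerivAt (fun y : ℝ => e₀ + e₁*y + e₂*y^2) (e₁ + 2*e₂*x) x := by
    have h := (((hasDerivAt_id x).const_mul e₁).const_add e₀).add
      ((hasDerivAt_pow 2 x).const_mul e₂)
    refine h.congr_deriv ?_
    push_cast; ring
  have hden : HasDerivAt (fun y : ℝ => 2*(y+d)*(y*d - b*c))
      (2*(x*d-b*c) + 2*(x+d)*d) x := by
    have h := ((((hasDerivAt_id x).add_const d).const_mul 2).mul
      (((hasDerivAt_id x).mul_const d).sub_const (b*c)))
    refine h.congr_deriv ?_
    simp only [id_eq]; ring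
  exact hnum.div hden (by
    intro h
    rcases mul_eq_zero.mp h with h'|h'
    · rcases mul_eq_zero.mp h' with h''|h''
      · norm_num at h''
      · exact h1 h''
    · exact h2 h')

lemma lyap_entries (a b c d : ℝ) (Pm : Matrix (Fin 2) (Fin 2) ℝ)
    (hτ : a + d ≠ 0) (hδ : a*d - b*c ≠ 0)
    (h : Pm * !![a,b;c,d] + (!![a,b;c,d])ᵀ * Pm = -1) :
    Pm 0 0 = (b*c - c^2 - d^2 + -d*a + 0*a^2)/(2*(a+d)*(a*d-b*c)) ∧
    Pm 0 1 = (b*d + c*a + 0*a^2)/(2*(a+d)*(a*d-b*c)) ∧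
    Pm 1 0 = (b*d + c*a + 0*a^2)/(2*(a+d)*(a*d-b*c)) ∧
    Pm 1 1 = (b*c - b^2 + -d*a + -1*a^2)/(2*(a+d)*(a*d-b*c)) := by
  have e00 := congrFun (congrFun h 0) 0
  have e01 := congrFun (congrFun h 0) 1
  have e10 := congrFun (congrFun h 1) 0
  have e11 := congrFun (congrFun h 1) 1
  simp only [Matrix.add_apply, Matrix.mul_apply, Fin.sum_univ_two, Matrix.neg_apply,
    Matrix.one_apply, Matrix.transpose_apply, Matrix.cons_val', Matrix.cons_val_zero,
    Matrix.cons_val_one, Matrix.head_cons, Matrix.empty_val', Matrix.cons_val_fin_one,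
    Matrix.head_fin_const, Matrix.of_apply, Matrix.vecHead] at e00 e01 e10 e11
  norm_num at e00 e01 e10 e11
  have hqs : Pm 1 0 = Pm 0 1 := by
    rcases mul_eq_zero.mp (show (a+d) * (Pm 1 0 - Pm 0 1) = 0 by
      linear_combination e10 - e01) with h'|h'
    · exact absurd h' hτ
    · linarith
  rw [hqs] at e00 e10 e11
  have hD : 2*(a+d)*(a*d-b*c) ≠ 0 := by
    intro h'; rcases mul_eq_zero.mp h' with h''|h''
    · rcases mul_eq_zero.mp h'' with h3|h3
      · norm_num at h3
      · exact hτ h3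
    · exact hδ h''
  refine ⟨?_, ?_, ?_, ?_⟩
  · rw [eq_div_iff hD]
    linear_combination (d*(a+d) - b*c) * e00 + (-2*c*d) * e01 + c^2 * e11
  · rw [eq_div_iff hD]
    linear_combination (-b*d) * e00 + (2*a*d) * e01 + (-a*c) * e11
  · rw [hqs, eq_div_iff hD]
    linear_combination (-b*d) * e00 + (2*a*d) * e01 + (-a*c) * e11
  · rw [eq_div_iff hD]
    linear_combination b^2 * e00 + (-2*a*b) * e01 + (a*(a+d) - b*c) * e11

set_option maxHeartbeats 2000000 in
theorem stmt_4 : ∃ C₀ > (0:ℝ),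
    ∀ (a11 a11' : ℝ → ℝ) (a12 a21 a22 : ℝ) (A P P' : ℝ → Matrix (Fin 2) (Fin 2) ℝ),
    (∀ α : ℝ, A α = !![a11 α, a12; a21, a22]) →
    (∀ α ∈ Icc (0:ℝ) 1, HasDerivWithinAt a11 (a11' α) (Icc (0:ℝ) 1) α) →
    a22 < 0 →
    (∀ α ∈ Icc (0:ℝ) 1, 0 < (A α).det) →
    (∀ α ∈ Icc (0:ℝ) 1, (A α).trace < 0) →
    (∀ α ∈ Icc (0:ℝ) 1, P α * A α + (A α)ᵀ * P α = -1) →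
    (∀ α ∈ Icc (0:ℝ) 1, ∀ i j,
      HasDerivWithinAt (fun a => P a i j) (P' α i j) (Icc (0:ℝ) 1) α) →
    ∀ α ∈ Icc (0:ℝ) 1,
      |a11' α| / (2 * (A α).trace ^ 2) ≤ frobNorm (P' α) ∧
      frobNorm (P' α) ≤ C₀ * |a11' α| * frobNorm (A α) ^ 4 / ((A α).trace * (A α).det) ^ 2 := by
  refine ⟨100, by norm_num, ?_⟩
  intro a11 a11' a12 a21 a22 A P P' hA ha11 ha22 hdet htr hP hP' α hα
  have hdet' : ∀ β ∈ Icc (0:ℝ) 1, 0 < a11 β * a22 - a12*a21 := by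
    intro β hβ
    have h := hdet β hβ
    rwa [hA β, Matrix.det_fin_two_of] at h
  have htr' : ∀ β ∈ Icc (0:ℝ) 1, a11 β + a22 < 0 := by
    intro β hβ
    have h := htr β hβ
    rwa [hA β, Matrix.trace_fin_two_of] at h
  have hent := fun β (hβ : β ∈ Icc (0:ℝ) 1) =>
    lyap_entries (a11 β) a12 a21 a22 (P β) (ne_of_lt (htr' β hβ)) (ne_of_gt (hdet' β hβ))
      (by rw [← hA β]; exact hP β hβ)
  have hτ0 : a11 α + a22 < 0 := htr' α hα
  have hδ0 : 0 < a11 α * a22 - a12*a21 := hdet' α hα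
  have hder : ∀ (i j : Fin 2) (e₀ e₁ e₂ : ℝ),
      (∀ β ∈ Icc (0:ℝ) 1, P β i j =
        (e₀ + e₁*(a11 β) + e₂*(a11 β)^2) / (2*(a11 β + a22)*(a11 β * a22 - a12*a21))) →
      P' α i j = (((e₁ + 2*e₂*(a11 α))*(2*(a11 α+a22)*(a11 α*a22-a12*a21)) -
        (e₀+e₁*(a11 α)+e₂*(a11 α)^2)*(2*(a11 α*a22-a12*a21) + 2*(a11 α+a22)*a22)) /
        (2*(a11 α+a22)*(a11 α*a22-a12*a21))^2) * a11' α := by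
    intro i j e₀ e₁ e₂ hval
    have hg := (aux_deriv a12 a21 a22 e₀ e₁ e₂ (a11 α)
      (ne_of_lt hτ0) (ne_of_gt hδ0)).comp_hasDerivWithinAt α (ha11 α hα)
    have hg2 : HasDerivWithinAt (fun β => P β i j)
        ((((e₁ + 2*e₂*(a11 α))*(2*(a11 α+a22)*(a11 α*a22-a12*a21)) -
        (e₀+e₁*(a11 α)+e₂*(a11 α)^2)*(2*(a11 α*a22-a12*a21) + 2*(a11 α+a22)*a22)) /
        (2*(a11 α+a22)*(a11 α*a22-a12*a21))^2) * a11' α) (Icc (0:ℝ) 1) α :=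
      hg.congr (fun β hβ => hval β hβ) (hval α hα)
    have u := (uniqueDiffOn_Icc (show (0:ℝ)<1 by norm_num)) α hα
    rw [← (hP' α hα i j).derivWithin u, hg2.derivWithin u]
  have h00 := hder 0 0 (a12*a21 - a21^2 - a22^2) (-a22) 0 (fun β hβ => (hent β hβ).1)
  have h01 := hder 0 1 (a12*a22) a21 0 (fun β hβ => (hent β hβ).2.1)
  have h10 := hder 1 0 (a12*a22) a21 0 (fun β hβ => (hent β hβ).2.2.1)
  have h11 := hder 1 1 (a12*a21 - a12^2) (-a22) (-1) (fun β hβ => (hent β hβ).2.2.2)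
  have hτne : a11 α + a22 ≠ 0 := ne_of_lt hτ0
  have hδne : a11 α * a22 - a12*a21 ≠ 0 := ne_of_gt hδ0
  have H00 : P' α 0 0 = a11' α *
      (((a11 α * a22 - a12*a21)^2 + (a21^2+a22^2)*(a11 α * a22 - a12*a21)
        + (a21^2+a22^2)*((a11 α + a22)*a22)) /
       (2*(a11 α + a22)^2*(a11 α * a22 - a12*a21)^2)) := by
    rw [h00]; field_simp; ring
  have H01 : P' α 0 1 = a11' α *
      ((a21*(a11 α + a22)*(a11 α * a22 - a12*a21)
        - (a11 α*a21 + a12*a22)*((a11 α * a22 - a12*a21) + (a11 α + a22)*a22)) /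
       (2*(a11 α + a22)^2*(a11 α * a22 - a12*a21)^2)) := by
    rw [h01]; field_simp; ring
  have H10 : P' α 1 0 = a11' α *
      ((a21*(a11 α + a22)*(a11 α * a22 - a12*a21)
        - (a11 α*a21 + a12*a22)*((a11 α * a22 - a12*a21) + (a11 α + a22)*a22)) /
       (2*(a11 α + a22)^2*(a11 α * a22 - a12*a21)^2)) := by
    rw [h10]; field_simp; ring
  have H11 : P' α 1 1 = a11' α *
      ((((a11 α * a22 - a12*a21) + ((a11 α)^2+a12^2))*((a11 α * a22 - a12*a21) + (a11 α + a22)*a22)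
        - (a22 + 2*a11 α)*(a11 α + a22)*(a11 α * a22 - a12*a21)) /
       (2*(a11 α + a22)^2*(a11 α * a22 - a12*a21)^2)) := by
    rw [h11]; field_simp; ring
  have htrA : (A α).trace = a11 α + a22 := by rw [hA α, Matrix.trace_fin_two_of]
  have hdetA : (A α).det = a11 α * a22 - a12*a21 := by rw [hA α, Matrix.det_fin_two_of]
  have hFA : frobNorm (A α) = Real.sqrt ((a11 α)^2 + a12^2 + a21^2 + a22^2) := by
    rw [hA α]
    simp only [frobNorm, Fin.sum_univ_two, Matrix.cons_val', Matrix.cons_val_zero,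
      Matrix.cons_val_one, Matrix.head_cons, Matrix.empty_val', Matrix.cons_val_fin_one,
      Matrix.head_fin_const, Matrix.of_apply]
    ring_nf
  have hfr : frobNorm (P' α) =
      Real.sqrt ((P' α 0 0)^2 + (P' α 0 1)^2 + ((P' α 1 0)^2 + (P' α 1 1)^2)) := by
    simp only [frobNorm, Fin.sum_univ_two]
  rw [htrA, hdetA, hFA, hfr, H00, H01, H10, H11]
  exact final_ineq (a11 α) (a11' α) a12 a21 a22 ha22 hτ0 hδ0
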